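/- Let (A, ∘) be a pre-Lie superalgebra over a field of characteristic zero and let R : A → A be a Rota-Baxter operator of weight zero on (A, ∘). Then the products x ▷ y := R(x)∘y and x ◁ y := −(−1)^{|x||y|} y∘R(x), defined for homogeneous x, y ∈ A, make (A, ▷, ◁) an L-dendriform superalgebra. -/

import Mathlib

/-- The super sign `(−1)^{|x||y|}` for parities `i`, `j`. -/
def sgn (K : Type*) [Field K] (i j : ZMod 2) : K := (-1 : K) ^ (i.val * j.val)

/-- The product `x ▷ y := R(x)∘y`. -/
def rtOp {K A : Type*} [Field K] [AddCommGroup A] [Module K A]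
    (circ : A →ₗ[K] A →ₗ[K] A) (R : A →ₗ[K] A) (x y : A) : A := circ (R x) y

/-- The product `x ◁ y := −(−1)^{|x||y|} y∘R(x)` on homogeneous elements of
parities `i`, `j`. -/
def ltOp {K A : Type*} [Field K] [AddCommGroup A] [Module K A]
    (circ : A →ₗ[K] A →ₗ[K] A) (R : A →ₗ[K] A) (i j : ZMod 2) (x y : A) : A :=
  -(sgn K i j • circ y (R x))


lemma sgn_swap (K : Type*) [Field K] (i j : ZMod 2) : sgn K j i = sgn K i j := by
  simp [sgn, Nat.mul_comm]

lemma sgn_sq (K : Type*) [Field K] (i j : ZMod 2) : sgn K i j * sgn K i j = 1 := by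
  fin_cases i <;> fin_cases j <;>
    norm_num [sgn, ZMod.val, show (ZMod.val (2:ZMod 2)) = 0 from rfl, show (ZMod.val (1:ZMod 2)) = 1 from rfl,
      show (ZMod.val (0:ZMod 2)) = 0 from rfl]

lemma sgn_addl (K : Type*) [Field K] (i j k : ZMod 2) :
    sgn K (i + j) k = sgn K i k * sgn K j k := by
  rw [sgn, ZMod.val_add]
  fin_cases i <;> fin_cases j <;> fin_cases k <;>
    norm_num [sgn, ZMod.val, show (ZMod.val (2:ZMod 2)) = 0 from rfl, show (ZMod.val (1:ZMod 2)) = 1 from rfl,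
      show (ZMod.val (0:ZMod 2)) = 0 from rfl]

lemma sgn_addr (K : Type*) [Field K] (i j k : ZMod 2) :
    sgn K i (j + k) = sgn K i j * sgn K i k := by
  rw [sgn, ZMod.val_add]
  fin_cases i <;> fin_cases j <;> fin_cases k <;>
    norm_num [sgn, ZMod.val, show (ZMod.val (2:ZMod 2)) = 0 from rfl, show (ZMod.val (1:ZMod 2)) = 1 from rfl,
      show (ZMod.val (0:ZMod 2)) = 0 from rfl]

/-- if `R` is a Rota-Baxter operator of weight zero on a pre-Lie
superalgebra `(A,∘)`, then `x ▷ y := R(x)∘y` and `x ◁ y := −(−1)^{|x||y|} y∘R(x)` make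
`(A,▷,◁)` an L-dendriform superalgebra. -/
theorem stmt18 {K A : Type*} [Field K] [CharZero K] [AddCommGroup A] [Module K A]
    (𝒜 : ZMod 2 → Submodule K A) (hgr : DirectSum.IsInternal 𝒜)
    (circ : A →ₗ[K] A →ₗ[K] A)
    (hcirc_even : ∀ (i j : ZMod 2), ∀ x ∈ 𝒜 i, ∀ y ∈ 𝒜 j, circ x y ∈ 𝒜 (i + j))
    (hpre : ∀ (i j k : ZMod 2), ∀ x ∈ 𝒜 i, ∀ y ∈ 𝒜 j, ∀ z ∈ 𝒜 k,
      circ (circ x y) z - circ x (circ y z)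
        = sgn K i j • (circ (circ y x) z - circ y (circ x z)))
    (R : A →ₗ[K] A) (hR : ∀ (i : ZMod 2), ∀ x ∈ 𝒜 i, R x ∈ 𝒜 i)
    (hRB : ∀ (i j : ZMod 2), ∀ x ∈ 𝒜 i, ∀ y ∈ 𝒜 j,
      circ (R x) (R y) = R (circ (R x) y + circ x (R y))) :
    -- ▷ and ◁ are even
    (∀ (i j : ZMod 2), ∀ x ∈ 𝒜 i, ∀ y ∈ 𝒜 j, rtOp circ R x y ∈ 𝒜 (i + j)) ∧
    (∀ (i j : ZMod 2), ∀ x ∈ 𝒜 i, ∀ y ∈ 𝒜 j, ltOp circ R i j x y ∈ 𝒜 (i + j)) ∧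
    -- first L-dendriform super-identity
    (∀ (i j k : ZMod 2), ∀ x ∈ 𝒜 i, ∀ y ∈ 𝒜 j, ∀ z ∈ 𝒜 k,
      rtOp circ R x (rtOp circ R y z)
        = rtOp circ R (rtOp circ R x y) z + rtOp circ R (ltOp circ R i j x y) z
          + sgn K i j • rtOp circ R y (rtOp circ R x z)
          - sgn K i j • rtOp circ R (ltOp circ R j i y x) z
          - sgn K i j • rtOp circ R (rtOp circ R y x) z) ∧
    -- second L-dendriform super-identity
    (∀ (i j k : ZMod 2), ∀ x ∈ 𝒜 i, ∀ y ∈ 𝒜 j, ∀ z ∈ 𝒜 k,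
      rtOp circ R x (ltOp circ R j k y z)
        = ltOp circ R (i + j) k (rtOp circ R x y) z
          + sgn K i j • ltOp circ R j (i + k) y (rtOp circ R x z)
          + sgn K i j • ltOp circ R j (i + k) y (ltOp circ R i k x z)
          - sgn K i j • ltOp circ R (j + i) k (ltOp circ R j i y x) z) := by
  
  refine ⟨?_, ?_, ?_, ?_⟩
  · intro i j x hx y hy
    exact hcirc_even i j (R x) (hR i x hx) y hy
  · intro i j x hx y hy
    have h : circ y (R x) ∈ 𝒜 (i + j) := by
      rw [add_comm]; exact hcirc_even j i y hy (R x) (hR i x hx)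
    exact neg_mem (Submodule.smul_mem _ _ h)
  · intro i j k x hx y hy z hz
    have hRx := hR i x hx
    have hRy := hR j y hy
    have h3 := hpre i j k (R x) hRx (R y) hRy z hz
    have E1 : circ (circ (R x) (R y)) z
        = circ (R (circ (R x) y)) z + circ (R (circ x (R y))) z := by
      rw [hRB i j x hx y hy, map_add, map_add, LinearMap.add_apply]
    have E2 : circ (circ (R y) (R x)) z
        = circ (R (circ (R y) x)) z + circ (R (circ y (R x))) z := by
      rw [hRB j i y hy x hx, map_add, map_add, LinearMap.add_apply]
    have key : ∀ v : A, sgn K i j • sgn K i j • v = v := fun v => by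
      rw [smul_smul, sgn_sq, one_smul]
    simp only [rtOp, ltOp, sgn_swap K i j, map_neg, map_smul, LinearMap.neg_apply,
      LinearMap.smul_apply, smul_neg, neg_neg, key]
    linear_combination (norm := module) E1 - (sgn K i j) • E2 - h3
  · intro i j k x hx y hy z hz
    have hRx := hR i x hx
    have hRy := hR j y hy
    have h3 := hpre i k j (R x) hRx z hz (R y) hRy
    have E : circ z (circ (R x) (R y))
        = circ z (R (circ (R x) y)) + circ z (R (circ x (R y))) := by
      rw [hRB i j x hx y hy, map_add, map_add]
    simp only [rtOp, ltOp, sgn_addl, sgn_addr, sgn_swap K i j, map_neg, map_smul,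
      LinearMap.neg_apply, LinearMap.smul_apply, smul_neg, neg_neg, mul_smul]
    linear_combination (norm := module)
      (sgn K j k) • h3 - (sgn K i k * sgn K j k) • E
      + (sgn_sq K i j) • ((sgn K j k) • circ (circ (R x) z) (R y)
          - (sgn K j k * sgn K i k) • circ (circ z (R x)) (R y)
          + (sgn K j k * sgn K i k) • circ z (R (circ x (R y))))
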